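/- arXiv:1707.05718 — 3 statements merged into one kernel-verified Lean document; each statement's English description precedes it below -/
import Mathlib

section
/- (Soundness of EqFSCL.) For all closed terms P, Q ∈ S_A, if EqFSCL ⊢ P = Q then se(P) = se(Q). -/
/-- Evaluation trees over a set `A` of atoms, with leaves `T` and `F`. -/
inductive ETree (A : Type) : Type
  | leafT : ETree A
  | leafF : ETree A
  | node : ETree A → A → ETree A → ETree A

namespace ETree

/-- Leaf replacement `X[T↦Y, F↦Z]`. -/
def repl {A : Type} : ETree A → ETree A → ETree A → ETree A
  | leafT, y, _ => y
  | leafF, _, z => z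
  | node l a r, y, z => node (repl l y z) a (repl r y z)

end ETree

/-- Closed sequential propositional statements over `A`:
`P ::= a | T | F | ¬P | P ∧❛ P | P ∨❛ P`. -/
inductive STerm (A : Type) : Type
  | atom : A → STerm A
  | tt : STerm A
  | ff : STerm A
  | neg : STerm A → STerm A
  | and : STerm A → STerm A → STerm A
  | or : STerm A → STerm A → STerm A

/-- The short-circuit evaluation function `se : S_A → T_A`. -/
def se {A : Type} : STerm A → ETree A
  | .tt => .leafT
  | .ff => .leafF
  | .atom a => .node .leafT a .leafF
  | .neg P => (se P).repl .leafF .leafT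
  | .and P Q => (se P).repl (se Q) .leafF
  | .or P Q => (se P).repl .leafT (se Q)

/-- Derivability from the axiom set EqFSCL: the least congruence (w.r.t. `¬`, `∧❛`, `∨❛`)
on closed terms containing all closed substitution instances of the axioms (F1)-(F10). -/
inductive EqFSCL {A : Type} : STerm A → STerm A → Prop
  | refl (P) : EqFSCL P P
  | symm {P Q} : EqFSCL P Q → EqFSCL Q P
  | trans {P Q R} : EqFSCL P Q → EqFSCL Q R → EqFSCL P R
  | neg_congr {P Q} : EqFSCL P Q → EqFSCL (.neg P) (.neg Q)
  | and_congr {P P' Q Q'} : EqFSCL P Q → EqFSCL P' Q' → EqFSCL (.and P P') (.and Q Q')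
  | or_congr {P P' Q Q'} : EqFSCL P Q → EqFSCL P' Q' → EqFSCL (.or P P') (.or Q Q')
  | F1 : EqFSCL .ff (.neg .tt)
  | F2 (x y) : EqFSCL (.or x y) (.neg (.and (.neg x) (.neg y)))
  | F3 (x) : EqFSCL (.neg (.neg x)) x
  | F4 (x) : EqFSCL (.and .tt x) x
  | F5 (x) : EqFSCL (.or x .ff) x
  | F6 (x) : EqFSCL (.and .ff x) .ff
  | F7 (x y z) : EqFSCL (.and (.and x y) z) (.and x (.and y z))
  | F8 (x) : EqFSCL (.and (.neg x) .ff) (.and x .ff)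
  | F9 (x y) : EqFSCL (.or (.and x .ff) y) (.and (.or x .tt) y)
  | F10 (x y z) : EqFSCL (.or (.and x y) (.and z .ff))
      (.and (.or x (.and z .ff)) (.or y (.and z .ff)))

lemma repl_repl {A : Type} (X y z y' z' : ETree A) :
    (X.repl y z).repl y' z' = X.repl (y.repl y' z') (z.repl y' z') := by
  induction X with
  | leafT => rfl
  | leafF => rfl
  | node l a r ihl ihr => simp [ETree.repl, ihl, ihr]

lemma repl_id {A : Type} (X : ETree A) : X.repl .leafT .leafF = X := by
  induction X with
  | leafT => rfl
  | leafF => rfl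
  | node l a r ihl ihr => simp [ETree.repl, ihl, ihr]

/-- Soundness of EqFSCL: derivably equal closed terms have equal evaluation trees. -/
theorem eqFSCL_sound {A : Type} [Nonempty A] (P Q : STerm A) :
    EqFSCL P Q → se P = se Q := by
  intro h
  induction h with
  | refl P => rfl
  | symm _ ih => exact ih.symm
  | trans _ _ ih1 ih2 => exact ih1.trans ih2
  | neg_congr _ ih => simp [se, ih]
  | and_congr _ _ ih1 ih2 => simp [se, ih1, ih2]
  | or_congr _ _ ih1 ih2 => simp [se, ih1, ih2]
  | F1 => rfl
  | F2 x y => simp [se, repl_repl, ETree.repl, repl_id]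
  | F3 x => simp [se, repl_repl, ETree.repl, repl_id]
  | F4 x => rfl
  | F5 x => simp [se, repl_id]
  | F6 x => rfl
  | F7 x y z => simp [se, repl_repl, ETree.repl]
  | F8 x => simp [se, repl_repl, ETree.repl]
  | F9 x y => simp [se, repl_repl, ETree.repl]
  | F10 x y z => simp [se, repl_repl, ETree.repl]
end

section
/- (Independence of axiom F10.) Consider the algebra M with domain {0,1,2,3}, with constants T interpreted as 1 and F as 0, with negation given by ¬0=1, ¬1=0, ¬2=2, ¬3=3, with sequential conjunction ∧❛ given by the table (rows = left argument): 0∧❛y = 0 for all y; 1∧❛y = y; 2∧❛0=0, 2∧❛1=2, 2∧❛2=0, 2∧❛3=0; 3∧❛y = 3 for all y; and with sequential disjunction ∨❛ given by: 0∨❛y = y; 1∨❛y = 1 for all y; 2∨❛0=2, 2∨❛1=1, 2∨❛2=1, 2∨❛3=1; 3∨❛y = 3 for all y. Then the equations (F2) x ∨❛ y = ¬(¬x ∧❛ ¬y), (F4) T ∧❛ x = x, (F5) x ∨❛ F = x, (F6) F ∧❛ x = F, (F7) (x ∧❛ y) ∧❛ z = x ∧❛ (y ∧❛ z), (F8) ¬x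 ∧❛ F = x ∧❛ F, and (F9) (x ∧❛ F) ∨❛ y = (x ∨❛ T) ∧❛ y hold for all elements x, y, z of M, whereas (F10) (x ∧❛ y) ∨❛ (z ∧❛ F) = (x ∨❛ (z ∧❛ F)) ∧❛ (y ∨❛ (z ∧❛ F)) fails for x = y = 2, z = 3: the left-hand side evaluates to 3 and the right-hand side to 1. -/
/-- Negation of the four-element independence model. -/
def neg4 : Fin 4 → Fin 4 := ![1, 0, 2, 3]

/-- Sequential conjunction of the four-element independence model. -/
def and4 (x y : Fin 4) : Fin 4 :=
  ![![0, 0, 0, 0], ![0, 1, 2, 3], ![0, 2, 0, 0], ![3, 3, 3, 3]] x y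

/-- Sequential disjunction of the four-element independence model. -/
def or4 (x y : Fin 4) : Fin 4 :=
  ![![0, 1, 2, 3], ![1, 1, 1, 1], ![2, 1, 1, 1], ![3, 3, 3, 3]] x y

/-- Independence of axiom F10: in the model with domain `Fin 4`, `T = 1`, `F = 0`,
axioms (F2), (F4), (F5), (F6), (F7), (F8), (F9) hold, while (F10) fails at
`x = y = 2`, `z = 3`, its left-hand side being `3` and its right-hand side `1`. -/
theorem F10_independent :
    (∀ x y : Fin 4, or4 x y = neg4 (and4 (neg4 x) (neg4 y))) ∧
    (∀ x : Fin 4, and4 1 x = x) ∧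
    (∀ x : Fin 4, or4 x 0 = x) ∧
    (∀ x : Fin 4, and4 0 x = 0) ∧
    (∀ x y z : Fin 4, and4 (and4 x y) z = and4 x (and4 y z)) ∧
    (∀ x : Fin 4, and4 (neg4 x) 0 = and4 x 0) ∧
    (∀ x y : Fin 4, or4 (and4 x 0) y = and4 (or4 x 1) y) ∧
    or4 (and4 2 2) (and4 3 0) = 3 ∧
    and4 (or4 2 (and4 3 0)) (or4 2 (and4 3 0)) = 1 := by
  refine ⟨?_,?_,?_,?_,?_,?_,?_,rfl,rfl⟩ <;> decide
end

section
/- For every closed term P over the conditional signature Σ_CP(A) there exists a basic form Q such that CP ⊢ P = Q. -/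
/-- Closed terms over the conditional signature `Σ_CP(A) = {_◁_▷_, T, F, a | a ∈ A}`.
`cond x y z` denotes Hoare's conditional `x ◁ y ▷ z` (if `y` then `x` else `z`). -/
inductive CTerm (A : Type) : Type
  | atom : A → CTerm A
  | tt : CTerm A
  | ff : CTerm A
  | cond : CTerm A → CTerm A → CTerm A → CTerm A

/-- Derivability from the axiom set CP: the least congruence (w.r.t. the conditional)
on closed terms containing all closed substitution instances of (CP1)-(CP4). -/
inductive CPDer {A : Type} : CTerm A → CTerm A → Prop
  | refl (P) : CPDer P P
  | symm {P Q} : CPDer P Q → CPDer Q P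
  | trans {P Q R} : CPDer P Q → CPDer Q R → CPDer P R
  | cond_congr {P P' Q Q' R R'} : CPDer P P' → CPDer Q Q' → CPDer R R' →
      CPDer (.cond P Q R) (.cond P' Q' R')
  | CP1 (x y) : CPDer (.cond x .tt y) x
  | CP2 (x y) : CPDer (.cond x .ff y) y
  | CP3 (x) : CPDer (.cond .tt x .ff) x
  | CP4 (x y z u v) : CPDer (.cond x (.cond y z u) v)
      (.cond (.cond x y v) z (.cond x u v))

/-- Basic forms over `A`: `t ::= T | F | t ◁ a ▷ t`. -/
inductive IsBasicForm {A : Type} : CTerm A → Prop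
  | tt : IsBasicForm .tt
  | ff : IsBasicForm .ff
  | node (a : A) {P Q} : IsBasicForm P → IsBasicForm Q →
      IsBasicForm (.cond P (.atom a) Q)


lemma cond_basic {A : Type} {Q : CTerm A} (hQ : IsBasicForm Q) :
    ∀ P R : CTerm A, IsBasicForm P → IsBasicForm R →
      ∃ S : CTerm A, IsBasicForm S ∧ CPDer (.cond P Q R) S := by
  induction hQ with
  | tt => exact fun P R hP _ => ⟨P, hP, .CP1 P R⟩
  | ff => exact fun P R _ hR => ⟨R, hR, .CP2 P R⟩
  | node a h1 h2 ih1 ih2 =>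
    intro P R hP hR
    obtain ⟨S1, hS1, d1⟩ := ih1 P R hP hR
    obtain ⟨S2, hS2, d2⟩ := ih2 P R hP hR
    exact ⟨.cond S1 (.atom a) S2, .node a hS1 hS2,
      .trans (.CP4 _ _ _ _ _) (.cond_congr d1 (.refl _) d2)⟩

/-- Every closed conditional term is CP-derivably equal to a basic form. -/
theorem exists_basic_form {A : Type} [Nonempty A] (P : CTerm A) :
    ∃ Q : CTerm A, IsBasicForm Q ∧ CPDer P Q := by
  induction P with
  | atom a => exact ⟨.cond .tt (.atom a) .ff, .node a .tt .ff, .symm (.CP3 _)⟩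
  | tt => exact ⟨.tt, .tt, .refl _⟩
  | ff => exact ⟨.ff, .ff, .refl _⟩
  | cond P Q R ihP ihQ ihR =>
    obtain ⟨p, hp, dp⟩ := ihP
    obtain ⟨q, hq, dq⟩ := ihQ
    obtain ⟨r, hr, dr⟩ := ihR
    obtain ⟨S, hS, dS⟩ := cond_basic hq p r hp hr
    exact ⟨S, hS, .trans (.cond_congr dp dq dr) dS⟩
end
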